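/- Let p and q be real polynomials with only real, simple, strictly interlacing roots, with deg q = deg p + 1, positive leading coefficients, and such that p(x)q'(x) - p'(x)q(x) > 0 for all real x. Then the polynomial ω(z) = p(z) + i·q(z) has all its roots in the open upper half plane and satisfies |ω(z)| < |ω*(z)| for Im z > 0, i.e., ω belongs to the Hermite-Biehler class. -/

import Mathlib

open Complex Polynomial Finset

private lemma hb_conj_comp_algebraMap :
    (starRingEnd ℂ).comp (algebraMap ℝ ℂ) = algebraMap ℝ ℂ := by
  ext x; simp

private lemma hb_eval_conj_map (r : Polynomial ℝ) (w : ℂ) :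
    (r.map (algebraMap ℝ ℂ)).eval ((starRingEnd ℂ) w)
      = (starRingEnd ℂ) ((r.map (algebraMap ℝ ℂ)).eval w) := by
  rw [Polynomial.eval_map, Polynomial.eval_map, Polynomial.hom_eval₂,
    hb_conj_comp_algebraMap]

theorem hermite_biehler_for_polynomials (n : ℕ) (p q : Polynomial ℝ)
    (hpdeg : p.natDegree = n) (hqdeg : q.natDegree = n + 1)
    (hplead : 0 < p.leadingCoeff) (hqlead : 0 < q.leadingCoeff)
    (rp : Fin n → ℝ) (rq : Fin (n + 1) → ℝ)
    (hrp : StrictMono rp) (hrq : StrictMono rq)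
    (hproots : (p.map (algebraMap ℝ ℂ)).roots
      = Multiset.ofList (List.ofFn fun i => ((rp i : ℝ) : ℂ)))
    (hqroots : (q.map (algebraMap ℝ ℂ)).roots
      = Multiset.ofList (List.ofFn fun i => ((rq i : ℝ) : ℂ)))
    (hinter : ∀ i : Fin n, rq i.castSucc < rp i ∧ rp i < rq i.succ)
    (hW : ∀ x : ℝ, 0 < p.eval x * (Polynomial.derivative q).eval x
        - (Polynomial.derivative p).eval x * q.eval x) :
    (∀ z : ℂ, (p.map (algebraMap ℝ ℂ)).eval z + I * (q.map (algebraMap ℝ ℂ)).eval z = 0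
        → 0 < z.im) ∧
    (∀ z : ℂ, 0 < z.im →
      ‖(p.map (algebraMap ℝ ℂ)).eval z + I * (q.map (algebraMap ℝ ℂ)).eval z‖
        < ‖starRingEnd ℂ
            ((p.map (algebraMap ℝ ℂ)).eval (starRingEnd ℂ z)
              + I * (q.map (algebraMap ℝ ℂ)).eval (starRingEnd ℂ z))‖) := by
  have hinj : Function.Injective (algebraMap ℝ ℂ) := (algebraMap ℝ ℂ).injective
  set P : Polynomial ℂ := p.map (algebraMap ℝ ℂ) with hPdef
  set Q : Polynomial ℂ := q.map (algebraMap ℝ ℂ) with hQdef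
  have hrqinj : Function.Injective rq := hrq.injective
  set d : ℝ := q.leadingCoeff with hd
  set σ : Fin (n+1) → ℝ := fun j => ∏ k ∈ univ.erase j, (rq j - rq k) with hσdef
  have hσ : ∀ j, σ j ≠ 0 := by
    intro j
    refine Finset.prod_ne_zero_iff.mpr ?_
    intro k hk
    exact sub_ne_zero.mpr fun h => (Finset.mem_erase.mp hk).1 (hrqinj h.symm)
  set v : Fin (n+1) → ℝ := fun j => p.eval (rq j) / σ j with hvdef
  -- factorization of Q over ℂ
  have hQdeg : Q.natDegree = n + 1 := by
    rw [hQdef, natDegree_map_eq_of_injective hinj, hqdeg]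
  have hQlead : Q.leadingCoeff = (d : ℂ) := by
    rw [hQdef, leadingCoeff_map_of_injective hinj]; rfl
  have hcard : Multiset.card Q.roots = Q.natDegree := by
    rw [hQdef, hqroots, hQdeg]; simp
  have hQfac : Q = C (d:ℂ) * ∏ j, (X - C ((rq j : ℝ) : ℂ)) := by
    conv_lhs => rw [← C_leadingCoeff_mul_prod_multiset_X_sub_C hcard]
    rw [hQlead]
    congr 1
    rw [hQdef, hqroots]
    rw [show Multiset.ofList (List.ofFn fun i => ((rq i : ℝ) : ℂ))
        = (List.ofFn fun i => ((rq i : ℝ) : ℂ) : Multiset ℂ) from rfl]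
    rw [Multiset.map_coe, List.map_ofFn, Multiset.prod_coe, List.prod_ofFn]
    rfl
  have hqfac : q = C d * ∏ j, (X - C (rq j)) := by
    apply Polynomial.map_injective _ hinj
    rw [Polynomial.map_mul, Polynomial.map_C, Polynomial.map_prod]
    simp only [Polynomial.map_sub, Polynomial.map_X, Polynomial.map_C]
    exact hQfac
  have hqval : ∀ j, q.eval (rq j) = 0 := by
    intro j
    rw [hqfac, eval_mul, eval_prod]
    refine mul_eq_zero.mpr (Or.inr ?_)
    exact Finset.prod_eq_zero (mem_univ j) (by simp)
  have hq'val : ∀ j, (Polynomial.derivative q).eval (rq j) = d * σ j := by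
    intro j
    have hsplit : q = C d * ((X - C (rq j)) * ∏ k ∈ univ.erase j, (X - C (rq k))) := by
      rw [hqfac, ← Finset.mul_prod_erase _ _ (mem_univ j)]
    rw [hsplit, derivative_C_mul, derivative_mul]
    simp [eval_add, eval_mul, eval_prod, hσdef]
  have hvd : ∀ j, 0 < v j * d := by
    intro j
    have hWj := hW (rq j)
    rw [hqval j, hq'val j, mul_zero, sub_zero] at hWj
    have hσ2 : 0 < σ j ^ 2 := lt_of_le_of_ne (sq_nonneg _) (Ne.symm (pow_ne_zero 2 (hσ j)))
    have hvj : v j * d * σ j ^ 2 = p.eval (rq j) * (d * σ j) := by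
      rw [hvdef]
      field_simp [hσ j]
    nlinarith [hWj, hσ2, hvj]
  -- Lagrange expansion of p at the nodes rq
  have hprep : p = ∑ j, C (v j) * ∏ k ∈ univ.erase j, (X - C (rq k)) := by
    have hD : p - ∑ j, C (v j) * ∏ k ∈ univ.erase j, (X - C (rq k)) = 0 := by
      apply eq_zero_of_natDegree_lt_card_of_eval_eq_zero _ hrqinj
      · intro j
        rw [eval_sub, eval_finset_sum]
        rw [Finset.sum_eq_single j]
        · rw [eval_mul, eval_C, eval_prod]
          simp only [eval_sub, eval_X, eval_C]
          rw [hvdef]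
          simp only
          rw [div_mul_cancel₀ _ (hσ j)]
          ring
        · intro i _ hij
          rw [eval_mul, eval_prod]
          refine mul_eq_zero.mpr (Or.inr ?_)
          refine Finset.prod_eq_zero (Finset.mem_erase.mpr ⟨Ne.symm hij, mem_univ j⟩) ?_
          simp
        · intro h; exact absurd (mem_univ j) h
      · rw [Fintype.card_fin]
        refine lt_of_le_of_lt (natDegree_sub_le _ _) ?_
        rw [max_lt_iff]
        constructor
        · rw [hpdeg]; omega
        · refine lt_of_le_of_lt (natDegree_sum_le_of_forall_le _ _ ?_) (by omega : n < n + 1)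
          intro j _
          refine le_trans (natDegree_C_mul_le _ _) ?_
          refine le_trans (natDegree_prod_le _ _) ?_
          have : ∀ k ∈ univ.erase j, ((X : Polynomial ℝ) - C (rq k)).natDegree ≤ 1 := by
            intro k _; rw [natDegree_X_sub_C]
          refine le_trans (Finset.sum_le_sum this) ?_
          simp [Finset.card_erase_of_mem (mem_univ j)]
    exact sub_eq_zero.mp hD
  -- evaluation formulas over ℂ
  have hQev : ∀ z : ℂ, Q.eval z = (d : ℂ) * ∏ k, (z - (rq k : ℂ)) := by
    intro z
    rw [hQfac]
    simp [eval_prod]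
  have hPev : ∀ z : ℂ, P.eval z = ∑ j, (v j : ℂ) * ∏ k ∈ univ.erase j, (z - (rq k : ℂ)) := by
    intro z
    rw [hPdef]
    conv_lhs => rw [hprep]
    rw [Polynomial.map_sum]
    rw [eval_finset_sum]
    refine Finset.sum_congr rfl ?_
    intro j _
    rw [Polynomial.map_mul, Polynomial.map_C, Polynomial.map_prod]
    simp only [Polynomial.map_sub, Polynomial.map_X, Polynomial.map_C]
    simp [eval_prod]
  set K : ℂ → ℝ := fun z => ∑ j, (v j * d) * ∏ k ∈ univ.erase j, Complex.normSq (z - (rq k : ℂ))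
    with hKdef
  have key : ∀ z : ℂ, ((starRingEnd ℂ) (Q.eval z) * P.eval z).im = -z.im * K z := by
    intro z
    have hconjQ : (starRingEnd ℂ) (Q.eval z)
        = (d : ℂ) * ∏ k, ((starRingEnd ℂ) z - (rq k : ℂ)) := by
      rw [hQev z, map_mul, map_prod]
      simp [Complex.conj_ofReal]
    have hterm : ∀ j : Fin (n+1), (starRingEnd ℂ) (Q.eval z) *
          ((v j : ℂ) * ∏ k ∈ univ.erase j, (z - (rq k : ℂ)))
        = (((v j * d) * ∏ k ∈ univ.erase j, Complex.normSq (z - (rq k : ℂ)) : ℝ) : ℂ)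
            * ((starRingEnd ℂ) z - (rq j : ℂ)) := by
      intro j
      rw [hconjQ, ← Finset.mul_prod_erase _ _ (mem_univ j)]
      have hns : (∏ k ∈ univ.erase j, ((starRingEnd ℂ) z - (rq k : ℂ))) *
            ∏ k ∈ univ.erase j, (z - (rq k : ℂ))
          = ((∏ k ∈ univ.erase j, Complex.normSq (z - (rq k : ℂ)) : ℝ) : ℂ) := by
        rw [← Finset.prod_mul_distrib, Complex.ofReal_prod]
        refine Finset.prod_congr rfl ?_
        intro k _
        have hc : (starRingEnd ℂ) z - (rq k : ℂ) = (starRingEnd ℂ) (z - (rq k : ℂ)) := by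
          rw [map_sub, Complex.conj_ofReal]
        rw [hc, ← Complex.normSq_eq_conj_mul_self]
      push_cast
      calc (d:ℂ) * (((starRingEnd ℂ) z - (rq j:ℂ)) * ∏ k ∈ univ.erase j, ((starRingEnd ℂ) z - (rq k : ℂ)))
            * ((v j : ℂ) * ∏ k ∈ univ.erase j, (z - (rq k : ℂ)))
          = ((v j : ℂ) * (d:ℂ)) * ((∏ k ∈ univ.erase j, ((starRingEnd ℂ) z - (rq k : ℂ))) *
              ∏ k ∈ univ.erase j, (z - (rq k : ℂ))) * ((starRingEnd ℂ) z - (rq j:ℂ)) := by ring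
        _ = _ := by rw [hns]; push_cast; ring
    rw [hPev z, Finset.mul_sum]
    rw [Finset.sum_congr rfl fun j _ => hterm j]
    rw [Complex.im_sum]
    have : ∀ j : Fin (n+1), ((((v j * d) * ∏ k ∈ univ.erase j, Complex.normSq (z - (rq k : ℂ)) : ℝ) : ℂ)
        * ((starRingEnd ℂ) z - (rq j : ℂ))).im
        = ((v j * d) * ∏ k ∈ univ.erase j, Complex.normSq (z - (rq k : ℂ))) * (-z.im) := by
      intro j
      rw [Complex.mul_im, Complex.ofReal_re, Complex.ofReal_im]
      simp only [Complex.sub_im, Complex.conj_im, Complex.ofReal_im, zero_mul, add_zero]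
      ring
    rw [Finset.sum_congr rfl fun j _ => this j, ← Finset.sum_mul, hKdef]
    ring
  have hKpos : ∀ z : ℂ, z.im ≠ 0 → 0 < K z := by
    intro z hz
    refine Finset.sum_pos ?_ univ_nonempty
    intro j _
    refine mul_pos (hvd j) (Finset.prod_pos ?_)
    intro k _
    refine Complex.normSq_pos.mpr ?_
    intro h
    apply hz
    have := congrArg Complex.im h
    simpa using this
  constructor
  · -- part 1
    intro z hz
    by_contra hle
    push_neg at hle
    rcases lt_or_eq_of_le hle with hlt | heq
    · -- im z < 0
      have hPz : P.eval z = -(I * Q.eval z) := by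
        rw [eq_neg_iff_add_eq_zero]
        linear_combination hz
      have h1 : ((starRingEnd ℂ) (Q.eval z) * P.eval z).im = -Complex.normSq (Q.eval z) := by
        rw [hPz]
        rw [show (starRingEnd ℂ) (Q.eval z) * -(I * Q.eval z)
            = -(I * ((starRingEnd ℂ) (Q.eval z) * Q.eval z)) from by ring]
        rw [← Complex.normSq_eq_conj_mul_self]
        simp
      have h2 := key z
      rw [h1] at h2
      have h3 : 0 < -z.im * K z := by
        have := hKpos z (ne_of_lt hlt)
        nlinarith
      nlinarith [Complex.normSq_nonneg (Q.eval z)]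
    · -- im z = 0 : z is real
      have hzre : z = ((z.re : ℝ) : ℂ) := by
        apply Complex.ext <;> simp [← heq]
      have hpz : P.eval z = ((p.eval z.re : ℝ) : ℂ) := by
        rw [hzre, hPdef]
        rw [Polynomial.eval_map]
        exact Polynomial.eval₂_at_apply (algebraMap ℝ ℂ) z.re
      have hqz : Q.eval z = ((q.eval z.re : ℝ) : ℂ) := by
        rw [hzre, hQdef]
        rw [Polynomial.eval_map]
        exact Polynomial.eval₂_at_apply (algebraMap ℝ ℂ) z.re
      rw [hpz, hqz] at hz
      have hre : p.eval z.re = 0 := by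
        have := congrArg Complex.re hz
        simpa using this
      have him : q.eval z.re = 0 := by
        have := congrArg Complex.im hz
        simpa using this
      have := hW z.re
      rw [hre, him] at this
      simp at this
  · -- part 2
    intro z hz
    have hstar : (starRingEnd ℂ) (P.eval ((starRingEnd ℂ) z) + I * Q.eval ((starRingEnd ℂ) z))
        = P.eval z - I * Q.eval z := by
      rw [hPdef, hQdef, hb_eval_conj_map p z, hb_eval_conj_map q z]
      rw [map_add, map_mul]
      simp [Complex.conj_I]
      ring
    rw [hstar]
    set A := P.eval z with hA
    set B := Q.eval z with hB
    have hdiff : Complex.normSq (A - I * B) - Complex.normSq (A + I * B)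
        = -4 * ((starRingEnd ℂ) B * A).im := by
      simp only [Complex.normSq_apply, Complex.sub_re, Complex.sub_im, Complex.add_re,
        Complex.add_im, Complex.mul_re, Complex.mul_im, Complex.I_re, Complex.I_im,
        Complex.conj_re, Complex.conj_im]
      ring
    have hkey := key z
    rw [← hB, ← hA] at hkey
    have hKp := hKpos z (ne_of_gt hz)
    have hlt : Complex.normSq (A + I * B) < Complex.normSq (A - I * B) := by
      nlinarith [hdiff, hkey, mul_pos hz hKp]
    have h1 : ‖A + I * B‖ ^ 2 < ‖A - I * B‖ ^ 2 := by
      rw [Complex.sq_norm, Complex.sq_norm]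
      exact hlt
    exact lt_of_pow_lt_pow_left₀ 2 (norm_nonneg _) h1
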